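/- arXiv:1205.4161 — 2 statements merged into one kernel-verified Lean document; each statement's English description precedes it below -/
import Mathlib

section
/- Let n be even. Then the cycle C of length 2n in Q_n starting at the vertex ∅ with edge-direction sequence (1, 2, ..., n, 1, 2, ..., n) is a subgraph of Q_n, and the translates of E(C) under the group {σ_A : A ⊆ {1,...,n-1}, |A| even} of complementing automorphisms partition E(Q_n); hence this 2n-cycle divides Q_n. -/
open SimpleGraph

/-- `H` divides `G`: the edge set of `G` can be partitioned into edge sets of
subgraphs of `G`, each isomorphic to `H`. -/
def GraphDivides {α β : Type} (H : SimpleGraph α) (G : SimpleGraph β) : Prop :=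
  ∃ (ι : Type) (f : ι → G.Subgraph),
    (∀ i, Nonempty (H ≃g (f i).coe)) ∧
    ∀ e ∈ G.edgeSet, ∃! i, e ∈ (f i).edgeSet

/-- The `n`-dimensional hypercube graph. -/
def cube (n : ℕ) : SimpleGraph (Fin n → ZMod 2) where
  Adj x y := hammingDist x y = 1
  symm := ⟨fun x y (h : hammingDist x y = 1) => (hammingDist_comm y x).trans h⟩
  loopless := ⟨fun x (h : hammingDist x x = 1) => by simp [hammingDist_self] at h⟩

/-- The vertex reached after `t` steps of the walk starting at `∅` (the all-zero vector)
with edge-direction sequence `1, 2, ..., n, 1, 2, ..., n` (toggling one coordinate per step). -/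
def cycVert (n : ℕ) (t : ℕ) : Fin n → ZMod 2 :=
  fun j => if t ≤ n then (if (j : ℕ) < t then 1 else 0) else (if (j : ℕ) < t - n then 0 else 1)

/-- The edge set of the closed walk of length `2n` with direction sequence
`1, 2, ..., n, 1, 2, ..., n` starting at `∅`. -/
def cycEdges (n : ℕ) : Set (Sym2 (Fin n → ZMod 2)) :=
  {e | ∃ t < 2 * n, e = s(cycVert n t, cycVert n (t + 1))}

/-- The complementing automorphism `σ_A`, where `A` is viewed as its indicator vector `a`. -/
def sigmaMap {n : ℕ} (a : Fin n → ZMod 2) : (Fin n → ZMod 2) → (Fin n → ZMod 2) :=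
  fun x => a + x

open Finset in
section
lemma cycVert_apply (n t : ℕ) (j : Fin n) :
    cycVert n t j = (if (j:ℕ) < t then 1 else 0) + (if (j:ℕ) < t - n then 1 else 0) := by
  have hj := j.isLt
  unfold cycVert
  split_ifs <;> first | (exfalso; omega) | decide

lemma cycVert_succ {n t : ℕ} (hn : 0 < n) (ht : t < 2*n) :
    cycVert n (t+1) = cycVert n t + Pi.single (⟨t % n, Nat.mod_lt _ hn⟩ : Fin n) 1 := by
  funext j
  have hj := j.isLt
  simp only [Pi.add_apply, cycVert_apply, Pi.single_apply, Fin.ext_iff, Fin.val_mk]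
  rcases Nat.lt_or_ge t n with hc | hc
  · rw [Nat.mod_eq_of_lt hc]
    split_ifs <;> first | (exfalso; omega) | decide
  · rw [Nat.mod_eq_sub_mod hc, Nat.mod_eq_of_lt (by omega)]
    split_ifs <;> first | (exfalso; omega) | decide

lemma cycVert_zero (n : ℕ) : cycVert n 0 = 0 := by
  funext j; simp [cycVert_apply]

lemma cycVert_two_mul (n : ℕ) : cycVert n (2*n) = cycVert n 0 := by
  funext j
  have hj := j.isLt
  rw [cycVert_apply, cycVert_apply]
  split_ifs <;> first | (exfalso; omega) | decide

lemma cycVert_inj {n : ℕ} (hn : 0 < n) {t1 t2 : ℕ} (h1 : t1 < 2*n) (h2 : t2 < 2*n)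
    (h : cycVert n t1 = cycVert n t2) : t1 = t2 := by
  by_contra hne
  have key : ∀ s1 s2 : ℕ, s1 < s2 → s2 < 2*n → cycVert n s1 ≠ cycVert n s2 := by
    intro s1 s2 hlt hs2 heq
    have test : ∀ c : ℕ, (hc : c < n) → cycVert n s1 ⟨c, hc⟩ = cycVert n s2 ⟨c, hc⟩ :=
      fun c hc => congrFun heq ⟨c, hc⟩
    rcases le_or_gt s2 n with hc | hc
    · have e := test s1 (by omega)
      rw [cycVert_apply, cycVert_apply, Fin.val_mk] at e
      split_ifs at e <;> first | omega | exact absurd e (by decide)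
    · rcases lt_or_ge n s1 with hd | hd
      · have e := test (s1 - n) (by omega)
        rw [cycVert_apply, cycVert_apply, Fin.val_mk] at e
        split_ifs at e <;> first | omega | exact absurd e (by decide)
      · rcases Nat.eq_zero_or_pos s1 with h0 | h0
        · have e := test (n-1) (by omega)
          rw [cycVert_apply, cycVert_apply, Fin.val_mk] at e
          split_ifs at e <;> first | omega | exact absurd e (by decide)
        · have e := test 0 (by omega)
          rw [cycVert_apply, cycVert_apply, Fin.val_mk] at e
          split_ifs at e <;> first | omega | exact absurd e (by decide)
  rcases lt_or_gt_of_ne hne with hlt | hlt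
  · exact key t1 t2 hlt h2 h
  · exact key t2 t1 hlt h1 h.symm

lemma even_hamming_iff {n : ℕ} (z : Fin n → ZMod 2) :
    Even (hammingDist z 0) ↔ ∑ k, z k = 0 := by
  have h1 : ∑ k, z k = ((Finset.univ.filter (fun k => z k ≠ 0)).card : ZMod 2) := by
    rw [← Finset.sum_boole]
    refine Finset.sum_congr rfl fun k _ => ?_
    have h : ∀ b : ZMod 2, b = if b ≠ 0 then 1 else 0 := by decide
    exact h (z k)
  have h2 : hammingDist z 0 = (Finset.univ.filter (fun k => z k ≠ 0)).card := rfl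
  rw [h1, h2, even_iff_two_dvd]
  exact (ZMod.natCast_eq_zero_iff _ 2).symm

section
variable {n : ℕ}
abbrev V (n : ℕ) := Fin n → ZMod 2

def ones (n : ℕ) : V n := fun _ => 1
def sgl (j : Fin n) : V n := Pi.single j 1

lemma pz_add_self (z : V n) : z + z = 0 := by
  funext k
  show z k + z k = 0
  have h : ∀ b : ZMod 2, b + b = 0 := by decide
  exact h (z k)

lemma pz_eq_add_of_add_eq {a c x : V n} (h : a + c = x) : a = x + c := by
  rw [← h, add_assoc, pz_add_self, add_zero]

lemma hammingDist_add_left (a p q : V n) : hammingDist (a + p) (a + q) = hammingDist p q := by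
  rw [hammingDist_eq_hammingNorm, hammingDist_eq_hammingNorm]
  congr 1; abel

lemma sgl_apply (j k : Fin n) : sgl j k = if k = j then 1 else 0 := by
  rw [sgl, Pi.single_apply]

lemma hamming_single (x : V n) (m : Fin n) : hammingDist x (x + sgl m) = 1 := by
  have h : (Finset.univ.filter (fun k => x k ≠ (x + sgl m) k)) = {m} := by
    ext k
    simp only [Finset.mem_filter, Finset.mem_univ, true_and, Finset.mem_singleton,
      Pi.add_apply, sgl_apply]
    by_cases hk : k = m
    · subst hk; simp only [if_pos rfl]
      have h2 : ∀ b : ZMod 2, b ≠ b + 1 := by decide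
      simp [h2 (x k)]
    · simp [hk]
  show (Finset.univ.filter (fun k => x k ≠ (x + sgl m) k)).card = 1
  rw [h, Finset.card_singleton]

lemma cube_edge_form {x y : V n} (h : hammingDist x y = 1) :
    ∃ j : Fin n, y = x + sgl j := by
  have h' : (Finset.univ.filter (fun k => x k ≠ y k)).card = 1 := h
  obtain ⟨j, hj⟩ := Finset.card_eq_one.mp h'
  refine ⟨j, funext fun k => ?_⟩
  have hk : x k ≠ y k ↔ k = j := by
    constructor
    · intro hne
      have hmem : k ∈ Finset.univ.filter (fun k => x k ≠ y k) := by simp [hne]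
      rw [hj] at hmem; simpa using hmem
    · intro hkj; subst hkj
      have hmem : k ∈ Finset.univ.filter (fun k => x k ≠ y k) := by rw [hj]; simp
      simpa using hmem
  show y k = x k + sgl j k
  rw [sgl_apply]
  by_cases hkj : k = j
  · have hne : x k ≠ y k := hk.mpr hkj
    have h3 : ∀ a b : ZMod 2, a ≠ b → b = a + 1 := by decide
    rw [if_pos hkj]
    exact h3 _ _ hne
  · have heq : x k = y k := by by_contra hc; exact hkj (hk.mp hc)
    rw [if_neg hkj, add_zero, heq]

lemma sum_sgl (j : Fin n) : ∑ k, sgl j k = 1 := by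
  unfold sgl
  rw [Finset.sum_pi_single']
  simp

lemma sum_ones (hn : Even n) : ∑ k, ones n k = 0 := by
  unfold ones
  rw [Finset.sum_const, Finset.card_univ, Fintype.card_fin, nsmul_eq_mul, mul_one]
  rw [ZMod.natCast_eq_zero_iff]
  exact hn.two_dvd

lemma sum_add (p q : V n) : ∑ k, (p + q) k = (∑ k, p k) + ∑ k, q k := by
  simp [Finset.sum_add_distrib]

lemma ones_apply (k : Fin n) : ones n k = 1 := rfl

end

section
variable {n : ℕ}

lemma cycVert_succ' {t : ℕ} (hn : 0 < n) (ht : t < 2*n) :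
    cycVert n (t+1) = cycVert n t + sgl (⟨t % n, Nat.mod_lt _ hn⟩ : Fin n) :=
  cycVert_succ hn ht

lemma cycVert_add_n {t : ℕ} (ht : t ≤ n) : cycVert n (n + t) = ones n + cycVert n t := by
  funext j
  have hj := j.isLt
  simp only [Pi.add_apply, cycVert_apply, ones_apply]
  split_ifs <;> first | (exfalso; omega) | decide

lemma cycVert_fin_succ (hn : 0 < n) (τ : Fin (2*n)) :
    haveI : NeZero (2*n) := ⟨by omega⟩
    cycVert n ((τ + 1 : Fin (2*n)).val) = cycVert n (τ.val + 1) := by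
  haveI : NeZero (2*n) := ⟨by omega⟩
  have h1 : ((τ + 1 : Fin (2*n)).val) = (τ.val + 1) % (2*n) := by
    rw [Fin.add_def, Fin.val_one', Nat.mod_eq_of_lt (show 1 < 2*n by omega)]
  rw [h1]
  rcases Nat.lt_or_ge (τ.val + 1) (2*n) with h | h
  · rw [Nat.mod_eq_of_lt h]
  · have h2 : τ.val + 1 = 2*n := by have := τ.isLt; omega
    rw [h2, Nat.mod_self, ← cycVert_two_mul]
end

section
variable {n : ℕ}

lemma sgl_eq {j m : Fin n} (h : sgl j = sgl m) : j = m := by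
  have h1 := congrFun h j
  rw [sgl_apply, sgl_apply, if_pos rfl] at h1
  by_contra hc
  rw [if_neg hc] at h1
  exact one_ne_zero h1

lemma cycVert_succ_fin (hn : 0 < n) (j : Fin n) :
    cycVert n (j.val + 1) = cycVert n j.val + sgl j := by
  have h := cycVert_succ' hn (show j.val < 2*n by have := j.isLt; omega)
  rwa [show (⟨j.val % n, Nat.mod_lt _ hn⟩ : Fin n) = j from
    Fin.ext (by simp [Nat.mod_eq_of_lt j.isLt])] at h

lemma part1 (hn : 0 < n) : cycEdges n ⊆ (cube n).edgeSet := by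
  rintro e ⟨t, ht, rfl⟩
  rw [SimpleGraph.mem_edgeSet]
  show hammingDist (cycVert n t) (cycVert n (t+1)) = 1
  rw [cycVert_succ' hn ht]
  exact hamming_single _ _

lemma mem_sigma_image_iff (hn : 0 < n) (a x : V n) (j : Fin n) :
    s(x, x + sgl j) ∈ Sym2.map (sigmaMap a) '' cycEdges n ↔
      (a = x + cycVert n j.val ∨ a = x + sgl j + cycVert n j.val ∨
       a = x + ones n + cycVert n j.val ∨ a = x + sgl j + ones n + cycVert n j.val) := by
  have huv := cycVert_succ_fin hn j
  set u := cycVert n j.val with hu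
  constructor
  · rintro ⟨e', ⟨t, ht, rfl⟩, hmap⟩
    rw [Sym2.map_pair_eq] at hmap
    have hct1 := cycVert_succ' hn ht
    -- derive t % n = j
    have hja : sigmaMap a (cycVert n (t+1)) = sigmaMap a (cycVert n t) + sgl ⟨t % n, Nat.mod_lt _ hn⟩ := by
      show a + _ = a + _ + _
      rw [hct1, add_assoc]
    rw [Sym2.eq_iff] at hmap
    have hjm : (⟨t % n, Nat.mod_lt _ hn⟩ : Fin n) = j := by
      rcases hmap with ⟨hx, hy⟩ | ⟨hy, hx⟩
      · rw [hx, hy] at hja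
        have := pz_eq_add_of_add_eq hja.symm
        -- x + sgl j = x + sgl m → sgl j = sgl m
        have h2 : sgl j = sgl _ := add_left_cancel (a := x) hja
        exact (sgl_eq h2).symm
      · rw [hx, hy] at hja
        have h2 : x = x + (sgl j + sgl (⟨t % n, Nat.mod_lt _ hn⟩ : Fin n)) := by
          rw [← add_assoc]; exact hja
        have h3 : sgl j + sgl (⟨t % n, Nat.mod_lt _ hn⟩ : Fin n) = 0 := by
          have := h2.symm
          nth_rewrite 2 [show x = x + 0 from (add_zero x).symm] at this
          exact add_left_cancel this
        have h4 : sgl j = sgl (⟨t % n, Nat.mod_lt _ hn⟩ : Fin n) := by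
          have h5 := congrArg (· + sgl (⟨t % n, Nat.mod_lt _ hn⟩ : Fin n)) h3
          rwa [add_assoc, pz_add_self, add_zero, zero_add] at h5
        exact (sgl_eq h4).symm
    have hmodj : t % n = j.val := by rw [← hjm]
    have htj : t = j.val ∨ t = n + j.val := by
      rcases Nat.lt_or_ge t n with h | h
      · left; rw [← hmodj, Nat.mod_eq_of_lt h]
      · right
        rw [Nat.mod_eq_sub_mod h, Nat.mod_eq_of_lt (by omega)] at hmodj
        omega
    have hjn : j.val ≤ n := j.isLt.le
    rcases htj with rfl | rfl
    · rcases hmap with ⟨hx, _⟩ | ⟨hy, _⟩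
      · left; exact pz_eq_add_of_add_eq hx
      · right; left
        exact pz_eq_add_of_add_eq hy
    · have hcn : cycVert n (n + j.val) = ones n + u := cycVert_add_n hjn
      rcases hmap with ⟨hx, _⟩ | ⟨hy, _⟩
      · right; right; left
        have : a + (ones n + u) = x := by rw [← hcn]; exact hx
        have h6 := pz_eq_add_of_add_eq this
        rw [h6, ← add_assoc]
      · right; right; right
        have : a + (ones n + u) = x + sgl j := by rw [← hcn]; exact hy
        have h6 := pz_eq_add_of_add_eq this
        rw [h6, ← add_assoc]
  · intro h
    have hj2 : j.val < 2*n := by have := j.isLt; omega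
    have hone : cycVert n (n + j.val) = ones n + u := cycVert_add_n j.isLt.le
    have hone1 : cycVert n (n + j.val + 1) = ones n + (u + sgl j) := by
      rw [show n + j.val + 1 = n + (j.val + 1) from rfl, cycVert_add_n (by omega), huv]
    rcases h with rfl | rfl | rfl | rfl
    · refine ⟨s(cycVert n j.val, cycVert n (j.val + 1)), ⟨j.val, hj2, rfl⟩, ?_⟩
      rw [Sym2.map_pair_eq, huv]
      show s(x + u + u, x + u + (u + sgl j)) = _
      congr 1 <;> (abel_nf; simp [two_mul, pz_add_self, add_assoc])
    · refine ⟨s(cycVert n j.val, cycVert n (j.val + 1)), ⟨j.val, hj2, rfl⟩, ?_⟩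
      rw [Sym2.map_pair_eq, huv]
      show s(x + sgl j + u + u, x + sgl j + u + (u + sgl j)) = _
      rw [Sym2.eq_swap]
      congr 1 <;> (abel_nf; simp [two_mul, pz_add_self, add_assoc])
    · refine ⟨s(cycVert n (n + j.val), cycVert n (n + j.val + 1)), ⟨n + j.val, by omega, rfl⟩, ?_⟩
      rw [Sym2.map_pair_eq, hone, hone1]
      show s(x + ones n + u + (ones n + u), x + ones n + u + (ones n + (u + sgl j))) = _
      congr 1 <;> (abel_nf; simp [two_mul, pz_add_self, add_assoc])
    · refine ⟨s(cycVert n (n + j.val), cycVert n (n + j.val + 1)), ⟨n + j.val, by omega, rfl⟩, ?_⟩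
      rw [Sym2.map_pair_eq, hone, hone1]
      show s(x + sgl j + ones n + u + (ones n + u), x + sgl j + ones n + u + (ones n + (u + sgl j))) = _
      rw [Sym2.eq_swap]
      congr 1 <;> (abel_nf; simp [two_mul, pz_add_self, add_assoc])
end

section
variable {n : ℕ}

lemma zmod2_ne {c : ZMod 2} (h : c ≠ 0) : c = 1 := by revert c; decide

lemma four_determined {x u s o : V n} {m : Fin n} (hs : ∑ k, s k = 1) (ho : ∑ k, o k = 0)
    (hom : o m = 1) {a b : V n}
    (ha : a = x + u ∨ a = x + s + u ∨ a = x + o + u ∨ a = x + s + o + u)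
    (hb : b = x + u ∨ b = x + s + u ∨ b = x + o + u ∨ b = x + s + o + u)
    (has : ∑ k, a k = 0) (hbs : ∑ k, b k = 0) (ham : a m = 0) (hbm : b m = 0) : a = b := by
  rcases ha with rfl | rfl | rfl | rfl <;> rcases hb with rfl | rfl | rfl | rfl <;>
    first
      | rfl
      | (exfalso
         simp only [Pi.add_apply, Finset.sum_add_distrib, hs, ho, hom] at has hbs ham hbm
         revert has hbs ham hbm
         generalize (∑ k, x k) = X
         generalize (∑ k, u k) = U
         generalize (x m) = xm
         generalize (u m) = um
         try generalize (s m) = sm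
         revert X U xm um
         try revert sm
         first | decide | (intro _; decide))

lemma part2 (hn : Even n) (h2 : 2 ≤ n) {e : Sym2 (V n)} (he : e ∈ (cube n).edgeSet) :
    ∃! a : V n, (a ⟨n - 1, Nat.sub_lt (by omega) Nat.one_pos⟩ = 0 ∧ Even (hammingDist a 0)) ∧
      e ∈ Sym2.map (sigmaMap a) '' cycEdges n := by
  have hn0 : 0 < n := by omega
  set m : Fin n := ⟨n - 1, by omega⟩ with hm
  induction e using Sym2.ind with
  | _ x y =>
    rw [SimpleGraph.mem_edgeSet] at he
    obtain ⟨j, rfl⟩ := cube_edge_form he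
    set u := cycVert n j.val with hu
    set s := sgl j with hsdef
    set o := ones n with hodef
    have hs : ∑ k, s k = 1 := sum_sgl j
    have ho : ∑ k, o k = 0 := sum_ones hn
    have hom : o m = 1 := rfl
    have htwo : (2 : ZMod 2) = 0 := rfl
    have hmem : ∀ a : V n, s(x, x + s) ∈ Sym2.map (sigmaMap a) '' cycEdges n ↔
        (a = x + u ∨ a = x + s + u ∨ a = x + o + u ∨ a = x + s + o + u) :=
      fun a => mem_sigma_image_iff hn0 a x j
    -- abstract uniqueness
    have key : ∀ w : V n,
        (w = x + u ∨ w = x + s + u ∨ w = x + o + u ∨ w = x + s + o + u) →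
        (∑ k, w k = 0) → (w m = 0) →
        ∃! a : V n, (a m = 0 ∧ Even (hammingDist a 0)) ∧
          s(x, x + s) ∈ Sym2.map (sigmaMap a) '' cycEdges n := by
      intro w hw hws hwm
      refine ⟨w, ⟨⟨hwm, (even_hamming_iff w).mpr hws⟩, (hmem w).mpr hw⟩, ?_⟩
      rintro a ⟨⟨ham, haev⟩, hamem⟩
      exact four_determined hs ho hom ((hmem a).mp hamem) hw
        ((even_hamming_iff a).mp haev) hws ham hwm
    rcases eq_or_ne (∑ k, (x + u) k) 0 with hp | hp
    · rcases eq_or_ne ((x + u) m) 0 with hq | hq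
      · exact key (x + u) (Or.inl rfl) hp hq
      · refine key (x + o + u) (Or.inr (Or.inr (Or.inl rfl))) ?_ ?_
        · simp only [sum_add, ho] at hp ⊢
          first | linear_combination hp | linear_combination hp + htwo | linear_combination hp - htwo
        · have h1 : (x + u) m = 1 := zmod2_ne hq
          simp only [Pi.add_apply, hom] at h1 ⊢
          first | linear_combination h1 | linear_combination h1 + htwo | linear_combination h1 - htwo
    · have hp1 : ∑ k, (x + u) k = 1 := zmod2_ne hp
      rcases eq_or_ne ((x + s + u) m) 0 with hq | hq
      · refine key (x + s + u) (Or.inr (Or.inl rfl)) ?_ hq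
        simp only [sum_add, hs] at hp1 ⊢
        first | linear_combination hp1 | linear_combination hp1 + htwo | linear_combination hp1 - htwo
      · refine key (x + s + o + u) (Or.inr (Or.inr (Or.inr rfl))) ?_ ?_
        · simp only [sum_add, hs, ho] at hp1 ⊢
          first | linear_combination hp1 | linear_combination hp1 + htwo | linear_combination hp1 - htwo
        · have h1 : (x + s + u) m = 1 := zmod2_ne hq
          simp only [Pi.add_apply, hom] at h1 ⊢
          first | linear_combination h1 | linear_combination h1 + htwo | linear_combination h1 - htwo
end

section
variable {n : ℕ}

def cycSub (n : ℕ) (a : V n) : (cube n).Subgraph where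
  verts := Set.range (fun t : Fin (2*n) => a + cycVert n t.val)
  Adj x y := s(x, y) ∈ Sym2.map (sigmaMap a) '' cycEdges n
  adj_sub := by
    rintro x y ⟨e', ⟨t, ht, rfl⟩, hmap⟩
    have hn : 0 < n := by omega
    rw [Sym2.map_pair_eq, Sym2.eq_iff] at hmap
    have h1 : hammingDist (cycVert n t) (cycVert n (t+1)) = 1 := by
      rw [cycVert_succ' hn ht]; exact hamming_single _ _
    show hammingDist x y = 1
    rcases hmap with ⟨hx, hy⟩ | ⟨hx, hy⟩
    · rw [← hx, ← hy]
      show hammingDist (a + _) (a + _) = 1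
      rwa [hammingDist_add_left]
    · rw [← hx, ← hy]
      show hammingDist (a + _) (a + _) = 1
      rwa [hammingDist_add_left, hammingDist_comm]
  edge_vert := by
    rintro x y ⟨e', ⟨t, ht, rfl⟩, hmap⟩
    rw [Sym2.map_pair_eq, Sym2.eq_iff] at hmap
    have hv1 : sigmaMap a (cycVert n t) ∈
        Set.range (fun t : Fin (2*n) => a + cycVert n t.val) := ⟨⟨t, ht⟩, rfl⟩
    have hv2 : sigmaMap a (cycVert n (t+1)) ∈
        Set.range (fun t : Fin (2*n) => a + cycVert n t.val) := by
      rcases Nat.lt_or_ge (t+1) (2*n) with h | h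
      · exact ⟨⟨t+1, h⟩, rfl⟩
      · have h2 : t + 1 = 2*n := by omega
        refine ⟨⟨0, by omega⟩, ?_⟩
        show a + cycVert n 0 = sigmaMap a (cycVert n (t+1))
        rw [h2, cycVert_two_mul]
        rfl
    rcases hmap with ⟨hx, _⟩ | ⟨_, hx⟩
    · exact hx ▸ hv1
    · exact hx ▸ hv2
  symm := ⟨by
    intro x y h
    show s(y, x) ∈ _
    rwa [Sym2.eq_swap]⟩

lemma cycSub_edgeSet (a : V n) :
    (cycSub n a).edgeSet = Sym2.map (sigmaMap a) '' cycEdges n := by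
  ext e
  induction e using Sym2.ind with
  | _ x y => exact SimpleGraph.Subgraph.mem_edgeSet

lemma adj_iff (hn : 0 < n) (a : V n) (p q : Fin (2*n)) :
    haveI : NeZero (2*n) := ⟨by omega⟩
    (s(a + cycVert n p.val, a + cycVert n q.val) ∈ Sym2.map (sigmaMap a) '' cycEdges n ↔
      (q = p + 1 ∨ p = q + 1)) := by
  haveI : NeZero (2*n) := ⟨by omega⟩
  constructor
  · rintro ⟨e', ⟨t, ht, rfl⟩, hmap⟩
    rw [Sym2.map_pair_eq, Sym2.eq_iff] at hmap
    set τ : Fin (2*n) := ⟨t, ht⟩ with hτ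
    have hct1 : cycVert n ((τ+1 : Fin (2*n)).val) = cycVert n (t+1) := cycVert_fin_succ hn τ
    rcases hmap with ⟨h1, h2⟩ | ⟨h1, h2⟩
    · left
      have hp : τ = p := by
        have hc : a + cycVert n t = a + cycVert n p.val := h1
        exact Fin.ext (cycVert_inj hn ht p.isLt (add_left_cancel hc))
      have hq : (τ + 1 : Fin (2*n)) = q := by
        have hc : a + cycVert n (t+1) = a + cycVert n q.val := h2
        apply Fin.ext
        apply cycVert_inj hn (τ+1).isLt q.isLt
        rw [hct1]
        exact add_left_cancel hc
      rw [← hq, hp]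
    · right
      have hp : τ = q := by
        have hc : a + cycVert n t = a + cycVert n q.val := h1
        exact Fin.ext (cycVert_inj hn ht q.isLt (add_left_cancel hc))
      have hq : (τ + 1 : Fin (2*n)) = p := by
        have hc : a + cycVert n (t+1) = a + cycVert n p.val := h2
        apply Fin.ext
        apply cycVert_inj hn (τ+1).isLt p.isLt
        rw [hct1]
        exact add_left_cancel hc
      rw [← hq, hp]
  · rintro (rfl | rfl)
    · refine ⟨s(cycVert n p.val, cycVert n (p.val+1)), ⟨p.val, by have := p.isLt; omega, rfl⟩, ?_⟩
      rw [Sym2.map_pair_eq]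
      have h3 : cycVert n ((p+1 : Fin (2*n)).val) = cycVert n (p.val+1) := cycVert_fin_succ hn p
      show s(a + _, a + _) = s(a + _, a + _)
      rw [h3]
    · refine ⟨s(cycVert n q.val, cycVert n (q.val+1)), ⟨q.val, by have := q.isLt; omega, rfl⟩, ?_⟩
      rw [Sym2.map_pair_eq]
      have h3 : cycVert n ((q+1 : Fin (2*n)).val) = cycVert n (q.val+1) := cycVert_fin_succ hn q
      show s(a + _, a + _) = s(a + _, a + _)
      rw [h3, Sym2.eq_swap]

noncomputable def cycIso (hn : 0 < n) (a : V n) :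
    cycleGraph (2*n) ≃g (cycSub n a).coe := by
  haveI : NeZero (2*n) := ⟨by omega⟩
  have hone : (1 : Fin (2*n)).val = 1 := by
    rw [Fin.val_one']
    exact Nat.mod_eq_of_lt (by omega)
  refine ⟨Equiv.ofBijective (fun k : Fin (2*n) =>
      (⟨a + cycVert n k.val, ⟨k, rfl⟩⟩ : (cycSub n a).verts)) ⟨?_, ?_⟩, ?_⟩
  · intro p q hpq
    have h1 : a + cycVert n p.val = a + cycVert n q.val := congrArg Subtype.val hpq
    exact Fin.ext (cycVert_inj hn p.isLt q.isLt (add_left_cancel h1))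
  · rintro ⟨x, ⟨t, rfl⟩⟩
    exact ⟨t, rfl⟩
  · intro p q
    show (cycSub n a).Adj _ _ ↔ _
    rw [cycleGraph_adj']
    show s(a + cycVert n p.val, a + cycVert n q.val) ∈ _ ↔ _
    rw [adj_iff hn a p q]
    constructor
    · rintro (rfl | rfl)
      · right
        rw [add_sub_cancel_left, hone]
      · left
        rw [add_sub_cancel_left, hone]
    · rintro (h | h)
      · right
        have : p - q = 1 := Fin.ext (by rw [hone]; exact h)
        rw [sub_eq_iff_eq_add] at this
        rw [this, add_comm]
      · left
        have : q - p = 1 := Fin.ext (by rw [hone]; exact h)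
        rw [sub_eq_iff_eq_add] at this
        rw [this, add_comm]
end

theorem cycle_fundamental (n : ℕ) (hn : Even n) (h2 : 2 ≤ n) :
    cycEdges n ⊆ (cube n).edgeSet ∧
    (∀ e ∈ (cube n).edgeSet,
      ∃! a : Fin n → ZMod 2,
        (a ⟨n - 1, by omega⟩ = 0 ∧ Even (hammingDist a 0)) ∧
        e ∈ Sym2.map (sigmaMap a) '' cycEdges n) ∧
    GraphDivides (cycleGraph (2 * n)) (cube n) := by
  have hn0 : 0 < n := by omega
  refine ⟨part1 hn0, fun e he => part2 hn h2 he, ?_⟩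
  refine ⟨{a : V n // a ⟨n-1, by omega⟩ = 0 ∧ Even (hammingDist a 0)},
    fun i => cycSub n i.1, fun i => ⟨cycIso hn0 i.1⟩, ?_⟩
  intro e he
  obtain ⟨a0, ⟨hc, hmem⟩, huniq⟩ := part2 hn h2 he
  refine ⟨⟨a0, hc⟩, ?_, ?_⟩
  · show e ∈ (cycSub n a0).edgeSet
    rw [cycSub_edgeSet]; exact hmem
  · rintro ⟨a, hca⟩ hea
    have hea' : e ∈ (cycSub n a).edgeSet := hea
    rw [cycSub_edgeSet] at hea'
    exact Subtype.ext (huniq a ⟨hca, hea'⟩)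
end
end

section
/- If n is even, k divides n, and k < n, then the path P_{2k} with 2k edges divides Q_n. -/
open SimpleGraph

namespace PathCubeAux

open Finset

/-! ### Basic definitions -/

def eps (n d : ℕ) : Fin n → ZMod 2 := fun i => if i.val = d then 1 else 0

def DD (k m j t : ℕ) : ℕ := if t < k then j * k + t else ((j + 1) % m) * k + (t - k)

def ww (n k m j t : ℕ) : Fin n → ZMod 2 := ∑ s ∈ Finset.range t, eps n (DD k m j s)

def CC1 (k d : ℕ) : ZMod 2 :=
  if d % k = 0 then (if k % 2 = 0 then 0 else ((d / k) % 2 : ℕ)) else 1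

def CC2 (k d : ℕ) : ZMod 2 := if d % k = 0 then 1 else 0

def phiF (n : ℕ) (C : ℕ → ZMod 2) (x : Fin n → ZMod 2) : ZMod 2 :=
  ∑ i : Fin n, C i.val * x i

def Phi (n k : ℕ) (x : Fin n → ZMod 2) : ZMod 2 × ZMod 2 :=
  (phiF n (CC1 k) x, phiF n (CC2 k) x)

/-! ### char 2 helpers -/

lemma pflip {n : ℕ} {a b c : Fin n → ZMod 2} (h : a = b + c) : c = a + b := by
  subst h; funext i
  exact (by decide : ∀ u v : ZMod 2, v = u + v + u) (b i) (c i)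

lemma pflip2 {n : ℕ} {a b c : Fin n → ZMod 2} (h : c = a + b) : a = b + c := by
  subst h; funext i
  exact (by decide : ∀ u v : ZMod 2, u = v + (u + v)) (a i) (b i)

lemma pfour {n : ℕ} {x w e : Fin n → ZMod 2} : x + e = w + e + (x + w) := by
  funext i
  exact (by decide : ∀ a b c : ZMod 2, a + c = b + c + (a + b)) (x i) (w i) (e i)

lemma pfive {n : ℕ} {x w e : Fin n → ZMod 2} : x = w + e + (x + e + w) := by
  funext i
  exact (by decide : ∀ a b c : ZMod 2, a = b + c + (a + c + b)) (x i) (w i) (e i)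


lemma mul_add_mod_self {j s k : ℕ} : (j * k + s) % k = s % k := by
  rw [mul_comm, Nat.mul_add_mod]

lemma eps_inj {n a b : ℕ} (ha : a < n) (h : eps n a = eps n b) : a = b := by
  have hc : (if (⟨a, ha⟩ : Fin n).val = a then (1 : ZMod 2) else 0)
      = (if (⟨a, ha⟩ : Fin n).val = b then (1 : ZMod 2) else 0) := congrFun h ⟨a, ha⟩
  rw [if_pos rfl] at hc
  by_contra hne
  rw [if_neg (fun hh => hne hh)] at hc
  exact (by decide : (1 : ZMod 2) ≠ 0) hc

/-! ### arithmetic helpers -/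

lemma succ_mod_lt {m : ℕ} (hm : 2 ≤ m) (j : ℕ) : (j + 1) % m < m :=
  Nat.mod_lt _ (by omega)

lemma succ_mod_ne {m j : ℕ} (hm : 2 ≤ m) (hj : j < m) : (j + 1) % m ≠ j := by
  rcases Nat.lt_or_ge (j + 1) m with h | h
  · rw [Nat.mod_eq_of_lt h]; omega
  · have hjm : j + 1 = m := by omega
    rw [hjm, Nat.mod_self]; omega

lemma succ_mod_inj {m j j' : ℕ} (hj : j < m) (hj' : j' < m)
    (h : (j + 1) % m = (j' + 1) % m) : j = j' := by
  have e : ∀ a, a < m → (a + 1) % m = if a + 1 < m then a + 1 else 0 := by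
    intro a ha
    split
    · exact Nat.mod_eq_of_lt ‹_›
    · have h2 : a + 1 = m := by omega
      rw [h2, Nat.mod_self]
  rw [e j hj, e j' hj'] at h
  split_ifs at h <;> omega

lemma block_lt {n k m j s : ℕ} (hkm : k * m = n) (hj : j < m) (hs : s < k) :
    j * k + s < n := by
  calc j * k + s < j * k + k := by omega
    _ = (j + 1) * k := by ring
    _ ≤ m * k := Nat.mul_le_mul_right k (by omega)
    _ = n := by rw [mul_comm]; exact hkm

lemma block_inj {k j j' t t' : ℕ} (hk : 0 < k) (ht : t < k) (ht' : t' < k)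
    (h : j * k + t = j' * k + t') : j = j' ∧ t = t' := by
  have e : ∀ a b, b < k → (a * k + b) / k = a := by
    intro a b hb
    rw [mul_comm, Nat.mul_add_div hk, Nat.div_eq_of_lt hb, add_zero]
  have hjj : j = j' := by rw [← e j t ht, ← e j' t' ht', h]
  subst hjj
  exact ⟨rfl, by omega⟩

lemma DD_lt {n k m j t : ℕ} (hkm : k * m = n) (hk : 0 < k) (hm : 2 ≤ m)
    (hj : j < m) (ht : t < 2 * k) : DD k m j t < n := by
  unfold DD
  split
  · exact block_lt hkm hj ‹_›
  · exact block_lt hkm (succ_mod_lt hm j) (by omega)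

lemma DD_inj {n k m j s t : ℕ} (hkm : k * m = n) (hk : 0 < k) (hm : 2 ≤ m)
    (hj : j < m) (hs : s < 2 * k) (ht : t < 2 * k)
    (h : DD k m j s = DD k m j t) : s = t := by
  unfold DD at h
  split_ifs at h with h1 h2 h2
  · exact (block_inj hk h1 h2 h).2
  · exfalso
    have := (block_inj hk h1 (by omega : t - k < k) h).1
    exact succ_mod_ne hm hj this.symm
  · exfalso
    have := (block_inj hk (by omega : s - k < k) h2 h).1
    exact succ_mod_ne hm hj this
  · have := (block_inj hk (by omega : s - k < k) (by omega : t - k < k) h).2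
    omega

/-! ### coordinates of path vertices -/

lemma ww_succ (n k m j t : ℕ) :
    ww n k m j (t + 1) = ww n k m j t + eps n (DD k m j t) :=
  Finset.sum_range_succ _ _

lemma ww_step_apply (n k m j t : ℕ) (i : Fin n) :
    ww n k m j (t + 1) i = ww n k m j t i + eps n (DD k m j t) i := by
  rw [ww_succ]; rfl

lemma ww_apply_pos {n k m j t s0 : ℕ} (hkm : k * m = n) (hk : 0 < k) (hm : 2 ≤ m)
    (hj : j < m) (ht : t ≤ 2 * k) (hs0 : s0 < t) {i : Fin n}
    (hd : DD k m j s0 = i.val) : ww n k m j t i = 1 := by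
  unfold ww
  rw [Finset.sum_apply]
  rw [Finset.sum_eq_single s0]
  · simp only [eps]; rw [if_pos hd.symm]
  · intro b hb hbne
    have hb' := mem_range.mp hb
    simp only [eps]
    rw [if_neg]
    intro hc
    exact hbne (DD_inj hkm hk hm hj (by omega) (by omega) (hc.symm.trans hd.symm))
  · intro h; exact absurd (mem_range.mpr hs0) h

lemma ww_apply_zero {n k m j t : ℕ} {i : Fin n}
    (h : ∀ s, s < t → DD k m j s ≠ i.val) : ww n k m j t i = 0 := by
  unfold ww
  rw [Finset.sum_apply]
  apply Finset.sum_eq_zero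
  intro s hs
  simp only [eps]
  rw [if_neg]
  intro hc
  exact h s (mem_range.mp hs) hc.symm

lemma ww_ne {n k m j t t' : ℕ} (hkm : k * m = n) (hk : 0 < k) (hm : 2 ≤ m)
    (hj : j < m) (ht : t < t') (ht' : t' ≤ 2 * k) :
    ww n k m j t ≠ ww n k m j t' := by
  intro h
  have hDlt : DD k m j t < n := DD_lt hkm hk hm hj (by omega)
  have h1 : ww n k m j t' (⟨DD k m j t, hDlt⟩ : Fin n) = 1 :=
    ww_apply_pos hkm hk hm hj ht' ht rfl
  have h0 : ww n k m j t (⟨DD k m j t, hDlt⟩ : Fin n) = 0 := by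
    apply ww_apply_zero
    intro s hs hc
    have := DD_inj hkm hk hm hj (by omega) (by omega) hc
    omega
  rw [h, h1] at h0
  exact (by decide : (1 : ZMod 2) ≠ 0) h0

lemma ww_inj {n k m j t t' : ℕ} (hkm : k * m = n) (hk : 0 < k) (hm : 2 ≤ m)
    (hj : j < m) (ht : t ≤ 2 * k) (ht' : t' ≤ 2 * k)
    (h : ww n k m j t = ww n k m j t') : t = t' := by
  rcases lt_trichotomy t t' with hl | he | hl
  · exact absurd h (ww_ne hkm hk hm hj hl ht')
  · exact he
  · exact absurd h.symm (ww_ne hkm hk hm hj hl ht)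

lemma step_hamming {n k m j t : ℕ} (hkm : k * m = n) (hk : 0 < k) (hm : 2 ≤ m)
    (hj : j < m) (ht : t < 2 * k) (g : Fin n → ZMod 2) :
    hammingDist (ww n k m j t + g) (ww n k m j (t + 1) + g) = 1 := by
  have hDlt : DD k m j t < n := DD_lt hkm hk hm hj ht
  unfold hammingDist
  rw [Finset.card_eq_one]
  refine ⟨⟨DD k m j t, hDlt⟩, ?_⟩
  ext i
  simp only [Finset.mem_filter, Finset.mem_univ, true_and, Finset.mem_singleton]
  constructor
  · intro hne
    by_contra hi
    apply hne
    show ww n k m j t i + g i = ww n k m j (t + 1) i + g i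
    rw [ww_step_apply]
    have h0 : eps n (DD k m j t) i = 0 := by
      simp only [eps]
      rw [if_neg (fun hc => hi (Fin.ext hc))]
    rw [h0, add_zero]
  · intro hi
    subst hi
    show ww n k m j t _ + g _ ≠ ww n k m j (t + 1) _ + g _
    rw [ww_step_apply]
    have h1 : eps n (DD k m j t) (⟨DD k m j t, hDlt⟩ : Fin n) = 1 := by
      simp [eps]
    rw [h1]
    exact (by decide : ∀ a b : ZMod 2, a + b ≠ a + 1 + b) _ _

lemma adj_dir {n : ℕ} {x y : Fin n → ZMod 2} (h : (cube n).Adj x y) :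
    ∃ d : Fin n, y = x + eps n d.val := by
  have h1 : (Finset.filter (fun i => x i ≠ y i) Finset.univ).card = 1 := h
  obtain ⟨d, hd⟩ := Finset.card_eq_one.mp h1
  refine ⟨d, funext fun i => ?_⟩
  show y i = x i + eps n d.val i
  by_cases hi : i = d
  · subst hi
    have hmem : i ∈ Finset.filter (fun i => x i ≠ y i) Finset.univ := by
      rw [hd]; exact mem_singleton_self i
    have hne : x i ≠ y i := (mem_filter.mp hmem).2
    have he : eps n i.val i = 1 := by simp [eps]
    rw [he]
    exact (by decide : ∀ a b : ZMod 2, a ≠ b → b = a + 1) _ _ hne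
  · have hnmem : i ∉ Finset.filter (fun i => x i ≠ y i) Finset.univ := by
      rw [hd]; simpa using hi
    have hxy : x i = y i := by
      by_contra hc
      exact hnmem (mem_filter.mpr ⟨mem_univ _, hc⟩)
    have he : eps n d.val i = 0 := by
      simp only [eps]
      rw [if_neg (fun hc => hi (Fin.ext hc))]
    rw [he, add_zero, hxy]

/-! ### the linear functionals -/

lemma phiF_add {n : ℕ} (C : ℕ → ZMod 2) (x y : Fin n → ZMod 2) :
    phiF n C (x + y) = phiF n C x + phiF n C y := by
  unfold phiF
  rw [← Finset.sum_add_distrib]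
  apply Finset.sum_congr rfl
  intro i _
  rw [Pi.add_apply, mul_add]

lemma phiF_eps {n : ℕ} (C : ℕ → ZMod 2) {d : ℕ} (hd : d < n) :
    phiF n C (eps n d) = C d := by
  unfold phiF
  rw [Finset.sum_eq_single (⟨d, hd⟩ : Fin n)]
  · simp [eps]
  · intro b _ hb
    simp only [eps]
    rw [if_neg, mul_zero]
    intro hc
    exact hb (Fin.ext hc)
  · simp

lemma phiF_sum {n : ℕ} (C : ℕ → ZMod 2) (t : ℕ) (v : ℕ → Fin n → ZMod 2) :
    phiF n C (∑ s ∈ Finset.range t, v s) = ∑ s ∈ Finset.range t, phiF n C (v s) := by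
  induction t with
  | zero => simp [phiF]
  | succ t ih => rw [Finset.sum_range_succ, phiF_add, ih, Finset.sum_range_succ]

lemma Phi_add {n k : ℕ} (x y : Fin n → ZMod 2) :
    Phi n k (x + y) = Phi n k x + Phi n k y := by
  unfold Phi
  rw [Prod.mk_add_mk, phiF_add, phiF_add]

lemma ww_split {n k m j t : ℕ} (ht : t ≤ k) :
    ww n k m j (k + t) = ww n k m j k + ww n k m ((j + 1) % m) t := by
  induction t with
  | zero => simp [ww]
  | succ t ih =>
    rw [show k + (t + 1) = (k + t) + 1 from rfl, ww_succ, ih (by omega), ww_succ,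
      add_assoc]
    have hDeq : DD k m j (k + t) = DD k m ((j + 1) % m) t := by
      unfold DD
      rw [if_neg (by omega), if_pos (by omega)]
      congr 1
      omega
    rw [hDeq]

lemma sigma_phi2 {n k m j : ℕ} (hkm : k * m = n) (hk : 0 < k) (hj : j < m) :
    phiF n (CC2 k) (ww n k m j k) = 1 := by
  unfold ww
  rw [phiF_sum]
  have hterm : ∀ s ∈ Finset.range k, phiF n (CC2 k) (eps n (DD k m j s))
      = if s = 0 then (1 : ZMod 2) else 0 := by
    intro s hs
    have hs' := mem_range.mp hs
    have hD : DD k m j s = j * k + s := by unfold DD; rw [if_pos hs']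
    rw [hD, phiF_eps _ (block_lt hkm hj hs')]
    unfold CC2
    rw [mul_add_mod_self, Nat.mod_eq_of_lt hs']
  rw [Finset.sum_congr rfl hterm,
    Finset.sum_ite_eq' (Finset.range k) 0 (fun _ => (1 : ZMod 2)),
    if_pos (mem_range.mpr hk)]

lemma sigma_phi1 {n k m j : ℕ} (hkm : k * m = n) (hk : 0 < k) (hj : j < m) :
    phiF n (CC1 k) (ww n k m j k) = CC1 k (j * k) + ((k - 1 : ℕ) : ZMod 2) := by
  obtain ⟨k', rfl⟩ : ∃ k', k = k' + 1 := ⟨k - 1, by omega⟩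
  unfold ww
  rw [phiF_sum]
  have hterm : ∀ s ∈ Finset.range (k' + 1),
      phiF n (CC1 (k' + 1)) (eps n (DD (k' + 1) m j s))
      = if s = 0 then CC1 (k' + 1) (j * (k' + 1)) else 1 := by
    intro s hs
    have hs' := mem_range.mp hs
    have hD : DD (k' + 1) m j s = j * (k' + 1) + s := by unfold DD; rw [if_pos hs']
    rw [hD, phiF_eps _ (block_lt hkm hj hs')]
    by_cases h0 : s = 0
    · subst h0; rw [if_pos rfl]; simp
    · rw [if_neg h0]
      unfold CC1
      rw [mul_add_mod_self, Nat.mod_eq_of_lt hs']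
      rw [if_neg h0]
  rw [Finset.sum_congr rfl hterm, Finset.sum_range_succ']
  have hone : ∀ i : ℕ, (if i + 1 = 0 then CC1 (k' + 1) (j * (k' + 1)) else (1 : ZMod 2)) = 1 :=
    fun i => if_neg (Nat.succ_ne_zero i)
  rw [Finset.sum_congr rfl (fun i _ => hone i), if_pos rfl, Finset.sum_const,
    card_range, nsmul_eq_mul, mul_one, add_comm, Nat.add_sub_cancel]

lemma CC1_block {k : ℕ} (hk : 0 < k) (j : ℕ) :
    CC1 k (j * k) = if k % 2 = 0 then 0 else ((j % 2 : ℕ) : ZMod 2) := by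
  unfold CC1
  rw [if_pos (Nat.mul_mod_left j k), Nat.mul_div_cancel j hk]

lemma cast_sub_one_even {k : ℕ} (hk : 0 < k) (hke : k % 2 = 0) :
    ((k - 1 : ℕ) : ZMod 2) = 1 := by
  rw [show k - 1 = 2 * ((k - 1) / 2) + 1 from by omega]
  push_cast
  rw [(by decide : (2 : ZMod 2) = 0)]
  ring

lemma cast_sub_one_odd {k : ℕ} (hk : 0 < k) (hko : k % 2 = 1) :
    ((k - 1 : ℕ) : ZMod 2) = 0 := by
  rw [show k - 1 = 2 * ((k - 1) / 2) from by omega]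
  push_cast
  rw [(by decide : (2 : ZMod 2) = 0)]
  ring

/-! ### the four-candidates lemma -/

lemma four : ∀ u p q : ZMod 2 × ZMod 2, p ≠ 0 → q ≠ 0 → q ≠ p →
    (u = 0 ∧ u + p ≠ 0 ∧ u + q ≠ 0 ∧ u + q + p ≠ 0) ∨
    (u ≠ 0 ∧ u + p = 0 ∧ u + q ≠ 0 ∧ u + q + p ≠ 0) ∨
    (u ≠ 0 ∧ u + p ≠ 0 ∧ u + q = 0 ∧ u + q + p ≠ 0) ∨
    (u ≠ 0 ∧ u + p ≠ 0 ∧ u + q ≠ 0 ∧ u + q + p = 0) := by decide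

/-! ### the subgraphs -/

def PS (n k m : ℕ) (hkm : k * m = n) (hk : 0 < k) (hm : 2 ≤ m)
    (j : ℕ) (hj : j < m) (g : Fin n → ZMod 2) : (cube n).Subgraph where
  verts := {x | ∃ t, t ≤ 2 * k ∧ x = ww n k m j t + g}
  Adj x y := ∃ t, t < 2 * k ∧
    ((x = ww n k m j t + g ∧ y = ww n k m j (t + 1) + g) ∨
     (y = ww n k m j t + g ∧ x = ww n k m j (t + 1) + g))
  adj_sub := by
    rintro x y ⟨t, ht, ⟨h1, h2⟩ | ⟨h1, h2⟩⟩
    · subst h1; subst h2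
      exact step_hamming hkm hk hm hj ht g
    · subst h1; subst h2
      exact (cube n).adj_symm (step_hamming hkm hk hm hj ht g)
  edge_vert := by
    rintro x y ⟨t, ht, ⟨h1, h2⟩ | ⟨h1, h2⟩⟩
    · exact ⟨t, by omega, h1⟩
    · exact ⟨t + 1, by omega, h2⟩
  symm := by
    constructor
    rintro x y ⟨t, ht, h⟩
    exact ⟨t, ht, h.symm⟩

lemma PS_iso {n k m : ℕ} (hkm : k * m = n) (hk : 0 < k) (hm : 2 ≤ m)
    (j : ℕ) (hj : j < m) (g : Fin n → ZMod 2) :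
    Nonempty (pathGraph (2 * k + 1) ≃g (PS n k m hkm hk hm j hj g).coe) := by
  let F : Fin (2 * k + 1) → (PS n k m hkm hk hm j hj g).verts :=
    fun t => ⟨ww n k m j t.val + g, ⟨t.val, Nat.lt_succ_iff.mp t.isLt, rfl⟩⟩
  have hFbij : Function.Bijective F := by
    constructor
    · intro a b hab
      have h1 : ww n k m j a.val + g = ww n k m j b.val + g :=
        congrArg Subtype.val hab
      have h2 := add_right_cancel h1
      exact Fin.ext (ww_inj hkm hk hm hj (Nat.lt_succ_iff.mp a.isLt)
        (Nat.lt_succ_iff.mp b.isLt) h2)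
    · rintro ⟨x, t, ht, rfl⟩
      exact ⟨⟨t, by omega⟩, rfl⟩
  refine ⟨⟨Equiv.ofBijective F hFbij, ?_⟩⟩
  intro a b
  show (PS n k m hkm hk hm j hj g).coe.Adj (F a) (F b) ↔ (pathGraph (2 * k + 1)).Adj a b
  rw [Subgraph.coe_adj, pathGraph_adj]
  constructor
  · rintro ⟨t, ht, ⟨h1, h2⟩ | ⟨h1, h2⟩⟩
    · left
      have ha : a.val = t := ww_inj hkm hk hm hj (Nat.lt_succ_iff.mp a.isLt)
        (by omega) (add_right_cancel h1)
      have hb : b.val = t + 1 := ww_inj hkm hk hm hj (Nat.lt_succ_iff.mp b.isLt)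
        (by omega) (add_right_cancel h2)
      omega
    · right
      have hb : b.val = t := ww_inj hkm hk hm hj (Nat.lt_succ_iff.mp b.isLt)
        (by omega) (add_right_cancel h1)
      have ha : a.val = t + 1 := ww_inj hkm hk hm hj (Nat.lt_succ_iff.mp a.isLt)
        (by omega) (add_right_cancel h2)
      omega
  · rintro (h | h)
    · refine ⟨a.val, by omega, Or.inl ⟨rfl, ?_⟩⟩
      show ww n k m j b.val + g = ww n k m j (a.val + 1) + g
      rw [h]
    · refine ⟨b.val, by omega, Or.inr ⟨rfl, ?_⟩⟩
      show ww n k m j a.val + g = ww n k m j (b.val + 1) + g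
      rw [h]

lemma mem_PS_edge {n k m : ℕ} (hkm : k * m = n) (hk : 0 < k) (hm : 2 ≤ m)
    {j : ℕ} (hj : j < m) (g : Fin n → ZMod 2) (x : Fin n → ZMod 2) (d : Fin n) :
    s(x, x + eps n d.val) ∈ (PS n k m hkm hk hm j hj g).edgeSet ↔
    ∃ t, t < 2 * k ∧ DD k m j t = d.val ∧
      (g = x + ww n k m j t ∨ g = x + eps n d.val + ww n k m j t) := by
  rw [Subgraph.mem_edgeSet]
  constructor
  · rintro ⟨t, ht, h⟩
    refine ⟨t, ht, ?_⟩
    have hDlt : DD k m j t < n := DD_lt hkm hk hm hj ht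
    rcases h with ⟨h1, h2⟩ | ⟨h1, h2⟩
    · rw [ww_succ] at h2
      have he : eps n d.val = eps n (DD k m j t) := by
        funext i
        exact (by decide : ∀ a w g e1 e2 : ZMod 2,
          a = w + g → a + e1 = w + e2 + g → e1 = e2) _ _ _ _ _
          (congrFun h1 i) (congrFun h2 i)
      have hval : DD k m j t = d.val := (eps_inj d.isLt he).symm
      exact ⟨hval, Or.inl (pflip h1)⟩
    · rw [ww_succ] at h2
      have he : eps n d.val = eps n (DD k m j t) := by
        funext i
        exact (by decide : ∀ a w g e1 e2 : ZMod 2,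
          a + e1 = w + g → a = w + e2 + g → e1 = e2) _ _ _ _ _
          (congrFun h1 i) (congrFun h2 i)
      have hval : DD k m j t = d.val := (eps_inj d.isLt he).symm
      exact ⟨hval, Or.inr (pflip h1)⟩
  · rintro ⟨t, ht, hD, hg | hg⟩
    · refine ⟨t, ht, Or.inl ⟨pflip2 hg, ?_⟩⟩
      rw [ww_succ, hD, hg]
      exact pfour
    · refine ⟨t, ht, Or.inr ⟨pflip2 hg, ?_⟩⟩
      rw [ww_succ, hD, hg]
      exact pfive

end PathCubeAux

open PathCubeAux in
theorem path_two_k_divides_cube (n k : ℕ) (hn : Even n) (hdvd : k ∣ n) (hlt : k < n) :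
    GraphDivides (pathGraph (2 * k + 1)) (cube n) := by
  classical
  obtain ⟨m, hkm'⟩ := hdvd
  have hk : 0 < k := by
    rcases Nat.eq_zero_or_pos k with h | h
    · subst h; simp at hkm'; omega
    · exact h
  have hkm : k * m = n := hkm'.symm
  have hm : 2 ≤ m := by
    rcases m with _ | _ | m
    · exfalso; rw [Nat.mul_zero] at hkm; omega
    · exfalso; rw [Nat.mul_one] at hkm; omega
    · omega
  refine ⟨Fin m × {g : Fin n → ZMod 2 // Phi n k g = 0},
    fun i => PS n k m hkm hk hm i.1.val i.1.isLt i.2.val,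
    fun i => PS_iso hkm hk hm i.1.val i.1.isLt i.2.val, ?_⟩
  intro e he
  induction e using Sym2.ind with
  | _ x y =>
  rw [SimpleGraph.mem_edgeSet] at he
  obtain ⟨d, rfl⟩ := adj_dir he
  set t0 := d.val % k with ht0def
  set j0 := d.val / k with hj0def
  have ht0 : t0 < k := by rw [ht0def]; exact Nat.mod_lt _ hk
  have hj0 : j0 < m := by
    rw [hj0def, Nat.div_lt_iff_lt_mul hk]
    calc d.val < n := d.isLt
      _ = k * m := hkm.symm
      _ = m * k := mul_comm _ _
  have hd0 : j0 * k + t0 = d.val := by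
    rw [hj0def, ht0def, mul_comm]
    exact Nat.div_add_mod d.val k
  set j1 := (j0 + (m - 1)) % m with hj1def
  have hj1 : j1 < m := by rw [hj1def]; exact Nat.mod_lt _ (by omega)
  have hsucc : (j1 + 1) % m = j0 := by
    rw [hj1def, Nat.mod_add_mod, show j0 + (m - 1) + 1 = j0 + m from by omega,
      Nat.add_mod_right, Nat.mod_eq_of_lt hj0]
  have hD1 : DD k m j0 t0 = d.val := by
    unfold DD; rw [if_pos ht0]; exact hd0
  have hD2 : DD k m j1 (k + t0) = d.val := by
    unfold DD
    rw [if_neg (by omega), hsucc, show k + t0 - k = t0 from by omega]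
    exact hd0
  have hsplit : ww n k m j1 (k + t0) = ww n k m j1 k + ww n k m j0 t0 := by
    rw [ww_split (le_of_lt ht0), hsucc]
  set u := Phi n k (x + ww n k m j0 t0) with hudef
  set p := Phi n k (eps n d.val) with hpdef
  set q := Phi n k (ww n k m j1 k) with hqdef
  have hΦ1 : Phi n k (x + ww n k m j0 t0) = u := hudef.symm
  have hΦ2 : Phi n k (x + eps n d.val + ww n k m j0 t0) = u + p := by
    rw [show x + eps n d.val + ww n k m j0 t0
        = x + ww n k m j0 t0 + eps n d.val from by abel, Phi_add, ← hudef, ← hpdef]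
  have hΦ3 : Phi n k (x + ww n k m j1 (k + t0)) = u + q := by
    rw [hsplit, show x + (ww n k m j1 k + ww n k m j0 t0)
        = x + ww n k m j0 t0 + ww n k m j1 k from by abel, Phi_add, ← hudef, ← hqdef]
  have hΦ4 : Phi n k (x + eps n d.val + ww n k m j1 (k + t0)) = u + q + p := by
    rw [hsplit, show x + eps n d.val + (ww n k m j1 k + ww n k m j0 t0)
        = x + ww n k m j0 t0 + ww n k m j1 k + eps n d.val from by abel,
      Phi_add, Phi_add, ← hudef, ← hqdef, ← hpdef]
  have hp1 : p.1 = CC1 k d.val := by rw [hpdef]; exact phiF_eps _ d.isLt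
  have hp2 : p.2 = CC2 k d.val := by rw [hpdef]; exact phiF_eps _ d.isLt
  have hq1 : q.1 = CC1 k (j1 * k) + ((k - 1 : ℕ) : ZMod 2) := by
    rw [hqdef]; exact sigma_phi1 hkm hk hj1
  have hq2 : q.2 = 1 := by rw [hqdef]; exact sigma_phi2 hkm hk hj1
  have hpne : p ≠ 0 := by
    intro hp0
    have h1 : p.1 = 0 := by rw [hp0]; rfl
    have h2 : p.2 = 0 := by rw [hp0]; rfl
    rw [hp1] at h1; rw [hp2] at h2
    by_cases hc : d.val % k = 0
    · unfold CC2 at h2; rw [if_pos hc] at h2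
      exact (by decide : (1 : ZMod 2) ≠ 0) h2
    · unfold CC1 at h1; rw [if_neg hc] at h1
      exact (by decide : (1 : ZMod 2) ≠ 0) h1
  have hqne : q ≠ 0 := by
    intro hq0
    have h2 : q.2 = 0 := by rw [hq0]; rfl
    rw [hq2] at h2
    exact (by decide : (1 : ZMod 2) ≠ 0) h2
  have hqp : q ≠ p := by
    intro hqp0
    have h1 : q.1 = p.1 := by rw [hqp0]
    have h2 : q.2 = p.2 := by rw [hqp0]
    rw [hq1, hp1] at h1
    rw [hq2, hp2] at h2
    by_cases hc : d.val % k = 0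
    · have ht00 : t0 = 0 := by rw [ht0def]; exact hc
      have hdval : d.val = j0 * k := by rw [← hd0, ht00, add_zero]
      rw [hdval, CC1_block hk j0, CC1_block hk j1] at h1
      by_cases hke : k % 2 = 0
      · rw [if_pos hke, if_pos hke, cast_sub_one_even hk hke] at h1
        exact (by decide : (0 : ZMod 2) + 1 ≠ 0) h1
      · have hko : k % 2 = 1 := by omega
        rw [if_neg hke, if_neg hke, cast_sub_one_odd hk hko] at h1
        have hmev : m % 2 = 0 := by
          have h3 : n % 2 = k % 2 * (m % 2) % 2 := by
            conv_lhs => rw [← hkm]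
            rw [Nat.mul_mod]
          rw [hko, one_mul] at h3
          have h4 : n % 2 = 0 := Nat.even_iff.mp hn
          omega
        have hpar : j0 % 2 ≠ j1 % 2 := by
          rcases Nat.lt_or_ge (j1 + 1) m with hlt2 | hge2
          · have hj01 : j0 = j1 + 1 := by rw [← hsucc, Nat.mod_eq_of_lt hlt2]
            omega
          · have hj1m : j1 + 1 = m := by omega
            have hj00 : j0 = 0 := by rw [← hsucc, hj1m, Nat.mod_self]
            omega
        rcases Nat.mod_two_eq_zero_or_one j0 with e0 | e0 <;>
          rcases Nat.mod_two_eq_zero_or_one j1 with e1 | e1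
        · exact hpar (by omega)
        · rw [e0, e1] at h1
          exact (by decide : ¬(((1 : ℕ) : ZMod 2) + 0 = ((0 : ℕ) : ZMod 2))) h1
        · rw [e0, e1] at h1
          exact (by decide : ¬(((0 : ℕ) : ZMod 2) + 0 = ((1 : ℕ) : ZMod 2))) h1
        · exact hpar (by omega)
    · unfold CC2 at h2; rw [if_neg hc] at h2
      exact (by decide : (1 : ZMod 2) ≠ 0) h2
  have key : ∀ (jj : ℕ) (hjj : jj < m) (g : Fin n → ZMod 2),
      s(x, x + eps n d.val) ∈ (PS n k m hkm hk hm jj hjj g).edgeSet →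
      (jj = j0 ∧ (g = x + ww n k m j0 t0 ∨ g = x + eps n d.val + ww n k m j0 t0)) ∨
      (jj = j1 ∧ (g = x + ww n k m j1 (k + t0) ∨
        g = x + eps n d.val + ww n k m j1 (k + t0))) := by
    intro jj hjj g hmem
    rw [mem_PS_edge hkm hk hm hjj] at hmem
    obtain ⟨t, ht, hD, hg⟩ := hmem
    by_cases htk : t < k
    · left
      unfold DD at hD
      rw [if_pos htk] at hD
      rw [← hd0] at hD
      obtain ⟨hjj0, htt0⟩ := block_inj hk htk ht0 hD
      subst hjj0; subst htt0
      exact ⟨rfl, hg⟩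
    · right
      unfold DD at hD
      rw [if_neg htk] at hD
      rw [← hd0] at hD
      obtain ⟨hb, ho⟩ := block_inj hk (by omega : t - k < k) ht0 hD
      have hjj1 : jj = j1 := succ_mod_inj hjj hj1 (by rw [hb, hsucc])
      have htval : t = k + t0 := by omega
      subst hjj1; subst htval
      exact ⟨rfl, hg⟩
  rcases four u p q hpne hqne hqp with ⟨c1, c2, c3, c4⟩ | ⟨c1, c2, c3, c4⟩ |
    ⟨c1, c2, c3, c4⟩ | ⟨c1, c2, c3, c4⟩
  · refine ⟨(⟨j0, hj0⟩, ⟨x + ww n k m j0 t0, by rw [hΦ1]; exact c1⟩), ?_, ?_⟩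
    · exact (mem_PS_edge hkm hk hm hj0 _ x d).mpr ⟨t0, by omega, hD1, Or.inl rfl⟩
    · rintro ⟨⟨jj, hjj⟩, ⟨g, hgΦ⟩⟩ hmem'
      rcases key jj hjj g hmem' with ⟨hje, hge | hge⟩ | ⟨hje, hge | hge⟩
      · subst hje; subst hge; rfl
      · exfalso; subst hge; rw [hΦ2] at hgΦ; exact c2 hgΦ
      · exfalso; subst hge; rw [hΦ3] at hgΦ; exact c3 hgΦ
      · exfalso; subst hge; rw [hΦ4] at hgΦ; exact c4 hgΦ
  · refine ⟨(⟨j0, hj0⟩, ⟨x + eps n d.val + ww n k m j0 t0, by rw [hΦ2]; exact c2⟩), ?_, ?_⟩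
    · exact (mem_PS_edge hkm hk hm hj0 _ x d).mpr ⟨t0, by omega, hD1, Or.inr rfl⟩
    · rintro ⟨⟨jj, hjj⟩, ⟨g, hgΦ⟩⟩ hmem'
      rcases key jj hjj g hmem' with ⟨hje, hge | hge⟩ | ⟨hje, hge | hge⟩
      · exfalso; subst hge; rw [hΦ1] at hgΦ; exact c1 hgΦ
      · subst hje; subst hge; rfl
      · exfalso; subst hge; rw [hΦ3] at hgΦ; exact c3 hgΦ
      · exfalso; subst hge; rw [hΦ4] at hgΦ; exact c4 hgΦ
  · refine ⟨(⟨j1, hj1⟩, ⟨x + ww n k m j1 (k + t0), by rw [hΦ3]; exact c3⟩), ?_, ?_⟩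
    · exact (mem_PS_edge hkm hk hm hj1 _ x d).mpr ⟨k + t0, by omega, hD2, Or.inl rfl⟩
    · rintro ⟨⟨jj, hjj⟩, ⟨g, hgΦ⟩⟩ hmem'
      rcases key jj hjj g hmem' with ⟨hje, hge | hge⟩ | ⟨hje, hge | hge⟩
      · exfalso; subst hge; rw [hΦ1] at hgΦ; exact c1 hgΦ
      · exfalso; subst hge; rw [hΦ2] at hgΦ; exact c2 hgΦ
      · subst hje; subst hge; rfl
      · exfalso; subst hge; rw [hΦ4] at hgΦ; exact c4 hgΦ
  · refine ⟨(⟨j1, hj1⟩, ⟨x + eps n d.val + ww n k m j1 (k + t0), by rw [hΦ4]; exact c4⟩), ?_, ?_⟩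
    · exact (mem_PS_edge hkm hk hm hj1 _ x d).mpr ⟨k + t0, by omega, hD2, Or.inr rfl⟩
    · rintro ⟨⟨jj, hjj⟩, ⟨g, hgΦ⟩⟩ hmem'
      rcases key jj hjj g hmem' with ⟨hje, hge | hge⟩ | ⟨hje, hge | hge⟩
      · exfalso; subst hge; rw [hΦ1] at hgΦ; exact c1 hgΦ
      · exfalso; subst hge; rw [hΦ2] at hgΦ; exact c2 hgΦ
      · exfalso; subst hge; rw [hΦ3] at hgΦ; exact c3 hgΦ
      · subst hje; subst hge; rfl
end
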